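/- For every n ≥ 3: ‖s_n − f_n‖_S ≤ √2 · χ^{−1} · √(C² + χ) · C⁴ · ‖p_{n−3}‖₂. -/

import Mathlib

open Filter RealInnerProductSpace

variable {H : Type*} [NormedAddCommGroup H] [InnerProductSpace ℝ H]

/-- `Wlt P n` is the span of `P 0, …, P (n-1)`; thus `Wlt P 0 = ⊥ = W_{-1}` and
`Wlt P (n+1)` is the space `W_n = span{P_0, …, P_n}`. -/
def Wlt (P : ℕ → H) (n : ℕ) : Submodule ℝ H := Submodule.span ℝ (P '' Set.Iio n)

/-- `Wtot P` is the space `W = ⋃ₙ Wₙ` of all polynomials. -/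
def Wtot (P : ℕ → H) : Submodule ℝ H := Submodule.span ℝ (Set.range P)

/-- The Sobolev inner product `⟨f, g⟩_S = ⟨f, g⟩₂ + χ⟨Δf, Δg⟩₂`. -/
noncomputable def innerS (Δ : H →ₗ[ℝ] H) (χ : ℝ) (f g : H) : ℝ :=
  ⟪ f, g ⟫ + χ * ⟪ Δ f, Δ g ⟫

/-- The Sobolev norm `‖f‖_S = √(‖f‖₂² + χ‖Δf‖₂²)`. -/
noncomputable def normS (Δ : H →ₗ[ℝ] H) (χ : ℝ) (f : H) : ℝ :=
  Real.sqrt (‖f‖ ^ 2 + χ * ‖Δ f‖ ^ 2)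

lemma Wlt_mono (P : ℕ → H) {a b : ℕ} (h : a ≤ b) : Wlt P a ≤ Wlt P b :=
  Submodule.span_mono (Set.image_mono (Set.Iio_subset_Iio h))

lemma P_mem_Wlt (P : ℕ → H) {i n : ℕ} (h : i < n) : P i ∈ Wlt P n :=
  Submodule.subset_span ⟨i, h, rfl⟩

lemma Wlt_le_Wtot (P : ℕ → H) (n : ℕ) : Wlt P n ≤ Wtot P :=
  Submodule.span_mono (by rintro x ⟨i, -, rfl⟩; exact ⟨i, rfl⟩)

lemma delta_maps (P : ℕ → H) (Δ : H →ₗ[ℝ] H) (hΔ0 : Δ (P 0) = 0)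
    (hΔsucc : ∀ n, Δ (P (n + 1)) = P n) {m : ℕ} {u : H} (hu : u ∈ Wlt P (m + 1)) :
    Δ u ∈ Wlt P m := by
  have hle : Wlt P (m + 1) ≤ (Wlt P m).comap Δ := by
    rw [Wlt, Submodule.span_le]
    rintro x ⟨i, hi, rfl⟩
    simp only [Set.mem_Iio] at hi
    cases i with
    | zero => simp [Submodule.mem_comap, hΔ0]
    | succ j =>
      have : Δ (P (j + 1)) ∈ Wlt P m := by
        rw [hΔsucc]; exact P_mem_Wlt P (by omega)
      exact this
  exact hle hu

lemma degree_drop (P : ℕ → H) (hP : LinearIndependent ℝ P) (Δ : H →ₗ[ℝ] H)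
    (hΔ0 : Δ (P 0) = 0) (hΔsucc : ∀ n, Δ (P (n + 1)) = P n)
    {m : ℕ} {u : H} (hu : u ∈ Wlt P (m + 2)) (hΔu : Δ u ∈ Wlt P m) :
    u ∈ Wlt P (m + 1) := by
  have hsplit : Wlt P (m + 2) = Wlt P (m + 1) ⊔ Submodule.span ℝ {P (m + 1)} := by
    have hset : Set.Iio (m + 2) = Set.Iio (m + 1) ∪ {m + 1} := by
      ext i
      simp only [Set.mem_Iio, Set.mem_union, Set.mem_singleton_iff]
      omega
    rw [Wlt, Wlt, ← Submodule.span_union, ← Set.image_singleton, ← Set.image_union, hset]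
  rw [hsplit] at hu
  obtain ⟨v, hv, z, hz, rfl⟩ := Submodule.mem_sup.mp hu
  obtain ⟨c, rfl⟩ := Submodule.mem_span_singleton.mp hz
  have hΔv : Δ v ∈ Wlt P m := delta_maps P Δ hΔ0 hΔsucc hv
  have hc : c • P m ∈ Wlt P m := by
    have he : Δ (v + c • P (m + 1)) - Δ v = c • P m := by
      simp [map_add, map_smul, hΔsucc]
    rw [← he]; exact Submodule.sub_mem _ hΔu hΔv
  rcases eq_or_ne c 0 with h | h
  · simpa [h] using hv
  · exfalso
    have hmem : P m ∈ Wlt P m := by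
      have := (Wlt P m).smul_mem c⁻¹ hc
      rwa [smul_smul, inv_mul_cancel₀ h, one_smul] at this
    exact hP.notMem_span_image (by simp) hmem

lemma ker_drop (P : ℕ → H) (hP : LinearIndependent ℝ P) (Δ : H →ₗ[ℝ] H)
    (hΔ0 : Δ (P 0) = 0) (hΔsucc : ∀ n, Δ (P (n + 1)) = P n) :
    ∀ m, ∀ u ∈ Wlt P m, Δ u = 0 → u ∈ Wlt P 1 := by
  intro m
  induction m with
  | zero => intro u hu _; exact Wlt_mono P (by omega) hu
  | succ k ih =>
    cases k with
    | zero => intro u hu _; exact hu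
    | succ j =>
      intro u hu hΔu
      have h1 : u ∈ Wlt P (j + 1) :=
        degree_drop P hP Δ hΔ0 hΔsucc hu (by rw [hΔu]; exact Submodule.zero_mem _)
      exact ih u h1 hΔu

set_option maxHeartbeats 1000000 in
/-- For `n ≥ 3`: `‖s_n − f_n‖_S ≤ √2 χ⁻¹ √(C² + χ) C⁴ ‖p_{n−3}‖₂`. -/
theorem statement12
    (P : ℕ → H) (hP : LinearIndependent ℝ P)
    (Δ G : H →ₗ[ℝ] H)
    (hΔ0 : Δ (P 0) = 0) (hΔsucc : ∀ n, Δ (P (n + 1)) = P n)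
    (hGsym : ∀ u ∈ Wtot P, ∀ v ∈ Wtot P, ⟪ G u, v ⟫ = ⟪ u, G v ⟫)
    (hGinv : ∀ u ∈ Wtot P, Δ (G u) = u)
    (hGmap : ∀ n, ∀ u ∈ Wlt P (n + 1), G u ∈ Wlt P (n + 2))
    (C : ℝ) (hC : 0 < C)
    (hGbound : ∀ u ∈ Wtot P, ‖G u‖ ≤ C * ‖u‖)
    (χ : ℝ) (hχ : 0 < χ)
    (p : ℕ → H)
    (hpmonic : ∀ n, p n - P n ∈ Wlt P n)
    (hportho : ∀ n, ∀ w ∈ Wlt P n, ⟪ p n, w ⟫ = 0)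
    (s : ℕ → H)
    (hsmonic : ∀ n, s n - P n ∈ Wlt P n)
    (hsortho : ∀ n, ∀ w ∈ Wlt P n, innerS Δ χ (s n) w = 0)
    : ∀ n, 3 ≤ n →
      normS Δ χ (s n - G (p (n - 1))) ≤
        Real.sqrt 2 * χ⁻¹ * Real.sqrt (C ^ 2 + χ) * C ^ 4 * ‖p (n - 3)‖ := by
  intro n hn
  obtain ⟨m, rfl⟩ : ∃ m, n = m + 3 := ⟨n - 3, by omega⟩
  rw [show m + 3 - 1 = m + 2 by omega, show m + 3 - 3 = m by omega]
  have hpmem : ∀ k, p k ∈ Wlt P (k + 1) := by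
    intro k
    have h := Submodule.add_mem (Wlt P (k + 1)) (Wlt_mono P (Nat.le_succ k) (hpmonic k))
      (P_mem_Wlt P (Nat.lt_succ_self k))
    simpa using h
  set pp := p (m + 2) with hppdef
  have hppW : pp ∈ Wlt P (m + 3) := hpmem (m + 2)
  have hppT : pp ∈ Wtot P := Wlt_le_Wtot P _ hppW
  set w := s (m + 3) - G pp with hwdef
  -- G pp is monic of degree m+3
  have hGpW : G pp ∈ Wlt P (m + 4) := hGmap (m + 2) pp hppW
  have hGpmonic : G pp - P (m + 3) ∈ Wlt P (m + 3) := by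
    apply degree_drop P hP Δ hΔ0 hΔsucc
      (Submodule.sub_mem _ hGpW (P_mem_Wlt P (by omega)))
    rw [map_sub, hGinv pp hppT, hΔsucc]
    exact Wlt_mono P (by omega) (hpmonic (m + 2))
  have hwmem : w ∈ Wlt P (m + 3) := by
    have : w = (s (m + 3) - P (m + 3)) - (G pp - P (m + 3)) := by rw [hwdef]; abel
    rw [this]
    exact Submodule.sub_mem _ (hsmonic (m + 3)) hGpmonic
  have hd : Δ w ∈ Wlt P (m + 2) := delta_maps P Δ hΔ0 hΔsucc hwmem
  set g := G (Δ w) with hgdef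
  have hg : g ∈ Wlt P (m + 3) := hGmap (m + 1) (Δ w) hd
  set u0 := w - g with hu0def
  have hu0mem : u0 ∈ Wlt P (m + 3) := Submodule.sub_mem _ hwmem hg
  have hΔu0 : Δ u0 = 0 := by
    rw [hu0def, map_sub, hgdef, hGinv (Δ w) (Wlt_le_Wtot P _ hd), sub_self]
  have hu0 : u0 ∈ Wlt P 1 := ker_drop P hP Δ hΔ0 hΔsucc (m + 3) u0 hu0mem hΔu0
  -- N² = -⟪G pp, w⟫
  set N := normS Δ χ w with hNdef
  have hN0 : 0 ≤ N := Real.sqrt_nonneg _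
  have hN2 : N ^ 2 = ‖w‖ ^ 2 + χ * ‖Δ w‖ ^ 2 := by
    rw [hNdef, normS, Real.sq_sqrt (by positivity)]
  have hkey : N ^ 2 = - ⟪G pp, w⟫ := by
    have h1 : innerS Δ χ w w = innerS Δ χ (s (m + 3)) w - innerS Δ χ (G pp) w := by
      simp only [innerS, hwdef, map_sub, inner_sub_left]; ring
    have h2 : innerS Δ χ (s (m + 3)) w = 0 := hsortho (m + 3) w hwmem
    have h3 : innerS Δ χ (G pp) w = ⟪G pp, w⟫ := by
      rw [innerS, hGinv pp hppT, hportho (m + 2) (Δ w) hd]; ring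
    have h4 : innerS Δ χ w w = N ^ 2 := by
      rw [innerS, hN2, real_inner_self_eq_norm_sq, real_inner_self_eq_norm_sq]
    rw [← h4, h1, h2, h3]; ring
  -- split inner product
  have hsplit2 : ⟪G pp, w⟫ = ⟪pp, G g⟫ := by
    have hw' : w = g + u0 := by rw [hu0def]; abel
    have hu0T : u0 ∈ Wtot P := Wlt_le_Wtot P _ hu0mem
    have hgT : g ∈ Wtot P := Wlt_le_Wtot P _ hg
    have e1 : ⟪G pp, u0⟫ = 0 := by
      rw [hGsym pp hppT u0 hu0T]
      exact hportho (m + 2) (G u0) (Wlt_mono P (by omega) (hGmap 0 u0 hu0))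
    calc ⟪G pp, w⟫ = ⟪G pp, g⟫ + ⟪G pp, u0⟫ := by
          rw [hw']
          exact inner_add_right _ _ _
      _ = ⟪pp, G g⟫ := by rw [e1, hGsym pp hppT g hgT]; ring
  have hbound1 : N ^ 2 ≤ C ^ 2 * ‖pp‖ * ‖Δ w‖ := by
    have h5 : |⟪pp, G g⟫| ≤ ‖pp‖ * ‖G g‖ := abs_real_inner_le_norm _ _
    have h6 : ‖G g‖ ≤ C * ‖g‖ := hGbound g (Wlt_le_Wtot P _ hg)
    have h7 : ‖g‖ ≤ C * ‖Δ w‖ := hGbound (Δ w) (Wlt_le_Wtot P _ hd)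
    have hthis := hkey
    rw [hsplit2] at hthis
    have e2 : N ^ 2 ≤ ‖pp‖ * ‖G g‖ := by
      rw [hthis]; exact le_trans (neg_le_abs _) h5
    calc N ^ 2 ≤ ‖pp‖ * ‖G g‖ := e2
      _ ≤ ‖pp‖ * (C * ‖g‖) := mul_le_mul_of_nonneg_left h6 (norm_nonneg pp)
      _ ≤ ‖pp‖ * (C * (C * ‖Δ w‖)) := by
          apply mul_le_mul_of_nonneg_left _ (norm_nonneg pp)
          exact mul_le_mul_of_nonneg_left h7 hC.le
      _ = C ^ 2 * ‖pp‖ * ‖Δ w‖ := by ring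
  -- √χ ‖Δw‖ ≤ N
  have hdN : Real.sqrt χ * ‖Δ w‖ ≤ N := by
    rw [hNdef, normS]
    have : Real.sqrt χ * ‖Δ w‖ = Real.sqrt (χ * ‖Δ w‖ ^ 2) := by
      rw [Real.sqrt_mul hχ.le, Real.sqrt_sq (norm_nonneg _)]
    rw [this]
    apply Real.sqrt_le_sqrt
    nlinarith [sq_nonneg ‖w‖]
  -- N √χ ≤ C² ‖pp‖
  have hstep : Real.sqrt χ * N ≤ C ^ 2 * ‖pp‖ := by
    have hsχ : 0 < Real.sqrt χ := Real.sqrt_pos.mpr hχ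
    rcases eq_or_lt_of_le hN0 with h | h
    · rw [← h, mul_zero]; positivity
    · have h8 : Real.sqrt χ * N ^ 2 ≤ C ^ 2 * ‖pp‖ * (Real.sqrt χ * ‖Δ w‖) := by
        have := mul_le_mul_of_nonneg_left hbound1 hsχ.le
        calc Real.sqrt χ * N ^ 2 ≤ Real.sqrt χ * (C ^ 2 * ‖pp‖ * ‖Δ w‖) := this
          _ = C ^ 2 * ‖pp‖ * (Real.sqrt χ * ‖Δ w‖) := by ring
      have h9 : Real.sqrt χ * N ^ 2 ≤ C ^ 2 * ‖pp‖ * N :=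
        le_trans h8 (mul_le_mul_of_nonneg_left hdN (by positivity))
      have h10 : Real.sqrt χ * N * N ≤ C ^ 2 * ‖pp‖ * N := by
        calc Real.sqrt χ * N * N = Real.sqrt χ * N ^ 2 := by ring
          _ ≤ C ^ 2 * ‖pp‖ * N := h9
      exact le_of_mul_le_mul_right h10 h
  -- ‖pp‖ ≤ C² ‖p m‖
  have hppbound : ‖pp‖ ≤ C ^ 2 * ‖p m‖ := by
    set q := G (G (p m)) with hqdef
    have hq1 : G (p m) ∈ Wlt P (m + 2) := hGmap m (p m) (hpmem m)
    have hq : q ∈ Wlt P (m + 3) := hGmap (m + 1) (G (p m)) hq1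
    have hs1 : G (p m) - P (m + 1) ∈ Wlt P (m + 1) := by
      apply degree_drop P hP Δ hΔ0 hΔsucc
        (Submodule.sub_mem _ hq1 (P_mem_Wlt P (by omega)))
      rw [map_sub, hGinv (p m) (Wlt_le_Wtot P _ (hpmem m)), hΔsucc]
      exact hpmonic m
    have hs2 : q - P (m + 2) ∈ Wlt P (m + 2) := by
      apply degree_drop P hP Δ hΔ0 hΔsucc
        (Submodule.sub_mem _ hq (P_mem_Wlt P (by omega)))
      rw [hqdef, map_sub, hGinv (G (p m)) (Wlt_le_Wtot P _ hq1), hΔsucc]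
      exact hs1
    have hr : q - pp ∈ Wlt P (m + 2) := by
      have : q - pp = (q - P (m + 2)) - (pp - P (m + 2)) := by abel
      rw [this]
      exact Submodule.sub_mem _ hs2 (hpmonic (m + 2))
    have horth : ⟪pp, q - pp⟫ = 0 := hportho (m + 2) (q - pp) hr
    have hqsq : ‖pp‖ ^ 2 ≤ ‖q‖ ^ 2 := by
      have : q = pp + (q - pp) := by abel
      rw [this, norm_add_sq_real, horth]
      nlinarith [sq_nonneg ‖q - pp‖]
    have hqle : ‖pp‖ ≤ ‖q‖ := by
      have h12 := Real.sqrt_le_sqrt hqsq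
      rwa [Real.sqrt_sq (norm_nonneg _), Real.sqrt_sq (norm_nonneg _)] at h12
    have hq2 : ‖q‖ ≤ C * ‖G (p m)‖ := hGbound (G (p m)) (Wlt_le_Wtot P _ hq1)
    have hq3 : ‖G (p m)‖ ≤ C * ‖p m‖ := hGbound (p m) (Wlt_le_Wtot P _ (hpmem m))
    calc ‖pp‖ ≤ ‖q‖ := hqle
      _ ≤ C * ‖G (p m)‖ := hq2
      _ ≤ C * (C * ‖p m‖) := mul_le_mul_of_nonneg_left hq3 hC.le
      _ = C ^ 2 * ‖p m‖ := by ring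
  -- combine
  have hsχ : 0 < Real.sqrt χ := Real.sqrt_pos.mpr hχ
  have hfinal1 : N ≤ C ^ 4 * ‖p m‖ / Real.sqrt χ := by
    rw [le_div_iff₀ hsχ]
    calc N * Real.sqrt χ = Real.sqrt χ * N := by ring
      _ ≤ C ^ 2 * ‖pp‖ := hstep
      _ ≤ C ^ 2 * (C ^ 2 * ‖p m‖) := mul_le_mul_of_nonneg_left hppbound (by positivity)
      _ = C ^ 4 * ‖p m‖ := by ring
  have hconst : C ^ 4 * ‖p m‖ / Real.sqrt χ ≤
      Real.sqrt 2 * χ⁻¹ * Real.sqrt (C ^ 2 + χ) * C ^ 4 * ‖p m‖ := by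
    have h10 : Real.sqrt χ ≤ Real.sqrt 2 * Real.sqrt (C ^ 2 + χ) := by
      rw [← Real.sqrt_mul (by norm_num)]
      apply Real.sqrt_le_sqrt
      nlinarith [sq_nonneg C]
    have hss : Real.sqrt χ * Real.sqrt χ = χ := Real.mul_self_sqrt hχ.le
    have hsχ' : 0 < Real.sqrt χ := Real.sqrt_pos.mpr hχ
    have e0 : (1:ℝ) / Real.sqrt χ = Real.sqrt χ * χ⁻¹ := by
      rw [div_eq_iff hsχ'.ne', mul_right_comm, hss, mul_inv_cancel₀ hχ.ne']
    have h11 : (1:ℝ) / Real.sqrt χ ≤ Real.sqrt 2 * χ⁻¹ * Real.sqrt (C ^ 2 + χ) := by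
      rw [e0]
      calc Real.sqrt χ * χ⁻¹ ≤ (Real.sqrt 2 * Real.sqrt (C ^ 2 + χ)) * χ⁻¹ :=
            mul_le_mul_of_nonneg_right h10 (by positivity)
        _ = Real.sqrt 2 * χ⁻¹ * Real.sqrt (C ^ 2 + χ) := by ring
    have hCp : (0:ℝ) ≤ C ^ 4 * ‖p m‖ := by positivity
    calc C ^ 4 * ‖p m‖ / Real.sqrt χ = (C ^ 4 * ‖p m‖) * (1 / Real.sqrt χ) := by ring
      _ ≤ (C ^ 4 * ‖p m‖) * (Real.sqrt 2 * χ⁻¹ * Real.sqrt (C ^ 2 + χ)) :=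
          mul_le_mul_of_nonneg_left h11 hCp
      _ = Real.sqrt 2 * χ⁻¹ * Real.sqrt (C ^ 2 + χ) * C ^ 4 * ‖p m‖ := by ring
  exact le_trans hfinal1 hconst
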